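/- In the monoid M of block matrices [[1_k, B],[0, T]] (B ∈ Mat_{k,m}(ℂ), T diagonal), any two idempotents X and Y are o-conjugate: there exist Z, W ∈ M with X·Z = Z·Y and Y·W = W·X. Indeed Z = [[1_k, B_Y],[0, 0]] and W = [[1_k, B_X],[0, 0]] work, where B_X, B_Y are the upper-right blocks of X and Y. -/
import Mathlib


/-- Any two idempotents `X = [[1, B_X],[0, D_X]]` and
`Y = [[1, B_Y],[0, D_Y]]` of the block monoid are `o`-conjugate: with
`Z = [[1, B_Y],[0, 0]]` and `W = [[1, B_X],[0, 0]]` one has `X Z = Z Y` and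
`Y W = W X`. -/
theorem stmt17 (k m : ℕ) (BX BY : Matrix (Fin k) (Fin m) ℂ) (dX dY : Fin m → ℂ)
    (hX : (Matrix.fromBlocks (1 : Matrix (Fin k) (Fin k) ℂ) BX 0 (Matrix.diagonal dX) :
        Matrix (Fin k ⊕ Fin m) (Fin k ⊕ Fin m) ℂ) *
      Matrix.fromBlocks (1 : Matrix (Fin k) (Fin k) ℂ) BX 0 (Matrix.diagonal dX) =
        Matrix.fromBlocks (1 : Matrix (Fin k) (Fin k) ℂ) BX 0 (Matrix.diagonal dX))
    (hY : (Matrix.fromBlocks (1 : Matrix (Fin k) (Fin k) ℂ) BY 0 (Matrix.diagonal dY) :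
        Matrix (Fin k ⊕ Fin m) (Fin k ⊕ Fin m) ℂ) *
      Matrix.fromBlocks (1 : Matrix (Fin k) (Fin k) ℂ) BY 0 (Matrix.diagonal dY) =
        Matrix.fromBlocks (1 : Matrix (Fin k) (Fin k) ℂ) BY 0 (Matrix.diagonal dY)) :
    (Matrix.fromBlocks (1 : Matrix (Fin k) (Fin k) ℂ) BX 0 (Matrix.diagonal dX) :
        Matrix (Fin k ⊕ Fin m) (Fin k ⊕ Fin m) ℂ) * Matrix.fromBlocks (1 : Matrix (Fin k) (Fin k) ℂ) BY 0 0 =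
      Matrix.fromBlocks (1 : Matrix (Fin k) (Fin k) ℂ) BY 0 0 * Matrix.fromBlocks (1 : Matrix (Fin k) (Fin k) ℂ) BY 0 (Matrix.diagonal dY) ∧
    (Matrix.fromBlocks (1 : Matrix (Fin k) (Fin k) ℂ) BY 0 (Matrix.diagonal dY) :
        Matrix (Fin k ⊕ Fin m) (Fin k ⊕ Fin m) ℂ) * Matrix.fromBlocks (1 : Matrix (Fin k) (Fin k) ℂ) BX 0 0 =
      Matrix.fromBlocks (1 : Matrix (Fin k) (Fin k) ℂ) BX 0 0 * Matrix.fromBlocks (1 : Matrix (Fin k) (Fin k) ℂ) BX 0 (Matrix.diagonal dX) := by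
  have hY' : BY * Matrix.diagonal dY = 0 := by
    have := congrArg (fun A : Matrix (Fin k ⊕ Fin m) (Fin k ⊕ Fin m) ℂ =>
      A.toBlocks₁₂) hY
    have h2 : BY + BY * Matrix.diagonal dY = BY := by
      simpa [Matrix.fromBlocks_multiply, Matrix.toBlocks_fromBlocks₁₂] using this
    exact add_eq_left.mp h2
  have hX' : BX * Matrix.diagonal dX = 0 := by
    have := congrArg (fun A : Matrix (Fin k ⊕ Fin m) (Fin k ⊕ Fin m) ℂ =>
      A.toBlocks₁₂) hX
    have h2 : BX + BX * Matrix.diagonal dX = BX := by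
      simpa [Matrix.fromBlocks_multiply, Matrix.toBlocks_fromBlocks₁₂] using this
    exact add_eq_left.mp h2
  constructor <;> simp [Matrix.fromBlocks_multiply, hY', hX']
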